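/- Let a, b be points in a two-dimensional real normed vector space with ‖a‖ = ‖b‖ = 1 and ‖a − b‖ = 1, and let x₀, x₁ ∈ cone(a, b) with ‖x₀‖ ≤ ‖x₁‖, where cone(a, b) = {α·a + β·b : α, β ≥ 0}. Then ‖x₀ − x₁‖ ≤ ‖x₁‖. -/

import Mathlib

/-- The cone generated by `a` and `b`: all non-negative combinations `α • a + β • b`. -/
def cone {E : Type*} [AddCommGroup E] [Module ℝ E] (a b : E) : Set E :=
  {w | ∃ α β : ℝ, 0 ≤ α ∧ 0 ≤ β ∧ w = α • a + β • b}


/-- Lower bound: the `a`-coefficient is at most the norm. -/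
lemma coeff_le_norm' {E : Type*} [NormedAddCommGroup E] [NormedSpace ℝ E]
    (a b : E) (ha : ‖a‖ = 1) (hab : ‖a - b‖ ≤ 1) {α β : ℝ} (hα : 0 ≤ α) (hβ : 0 ≤ β) :
    α ≤ ‖α • a + β • b‖ := by
  have ha0 : a ≠ 0 := by intro h; simp [h] at ha
  obtain ⟨f, hf1, hfa⟩ := exists_dual_vector ℝ a (norm_ne_zero_iff.mpr ha0)
  rw [ha] at hfa
  have hfb : 0 ≤ f b := by
    have h1 : f (a - b) ≤ 1 := by
      calc f (a - b) ≤ ‖f (a - b)‖ := le_abs_self _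
        _ ≤ ‖f‖ * ‖a - b‖ := f.le_opNorm _
        _ ≤ 1 := by rw [hf1]; simpa using hab
    have := f.map_sub a b
    norm_cast at hfa
    nlinarith [this]
  have key : α ≤ f (α • a + β • b) := by
    simp only [map_add, map_smul, smul_eq_mul]
    norm_cast at hfa
    nlinarith
  calc α ≤ f (α • a + β • b) := key
    _ ≤ ‖f (α • a + β • b)‖ := le_abs_self _
    _ ≤ ‖f‖ * ‖α • a + β • b‖ := f.le_opNorm _
    _ = ‖α • a + β • b‖ := by rw [hf1, one_mul]

/-- Monotonicity in the `b`-coefficient. -/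
lemma norm_mono_beta {E : Type*} [NormedAddCommGroup E] [NormedSpace ℝ E]
    (a b : E) (ha : ‖a‖ = 1) (hab : ‖a - b‖ ≤ 1) {α β β' : ℝ}
    (hα : 0 ≤ α) (hβ : 0 ≤ β) (hββ' : β ≤ β') :
    ‖α • a + β • b‖ ≤ ‖α • a + β' • b‖ := by
  have hβ' : 0 ≤ β' := hβ.trans hββ'
  rcases eq_or_lt_of_le hβ' with h0 | h0
  · have hβ0 : β = 0 := le_antisymm (hββ'.trans h0.symm.le) hβ
    rw [hβ0, ← h0]
  · set lam := β / β' with hlam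
    have hlam0 : 0 ≤ lam := div_nonneg hβ h0.le
    have hlam1 : lam ≤ 1 := (div_le_one h0).mpr hββ'
    have hα_le : α ≤ ‖α • a + β' • b‖ := coeff_le_norm' a b ha hab hα hβ'
    have hdecomp : α • a + β • b = lam • (α • a + β' • b) + (1 - lam) • (α • a) := by
      have hlb : lam * β' = β := by rw [hlam]; field_simp
      rw [smul_add, smul_smul, smul_smul, hlb]
      module
    calc ‖α • a + β • b‖ = ‖lam • (α • a + β' • b) + (1 - lam) • (α • a)‖ := by rw [hdecomp]
      _ ≤ ‖lam • (α • a + β' • b)‖ + ‖(1 - lam) • (α • a)‖ := norm_add_le _ _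
      _ = lam * ‖α • a + β' • b‖ + (1 - lam) * α := by
          rw [norm_smul, norm_smul, norm_smul, ha, Real.norm_eq_abs, Real.norm_eq_abs,
            Real.norm_eq_abs, abs_of_nonneg hlam0, abs_of_nonneg (by linarith : (0:ℝ) ≤ 1 - lam),
            abs_of_nonneg hα]
          ring
      _ ≤ lam * ‖α • a + β' • b‖ + (1 - lam) * ‖α • a + β' • b‖ := by
          have : (0:ℝ) ≤ 1 - lam := by linarith
          nlinarith
      _ = ‖α • a + β' • b‖ := by ring

theorem norm_sub_le_in_cone_aux
    {E : Type*} [NormedAddCommGroup E] [NormedSpace ℝ E]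
    (hdim : Module.finrank ℝ E = 2)
    (a b : E) (ha : ‖a‖ = 1) (hb : ‖b‖ = 1) (hab : ‖a - b‖ = 1)
    (x₀ x₁ : E) (hx₀ : ∃ α β : ℝ, 0 ≤ α ∧ 0 ≤ β ∧ x₀ = α • a + β • b)
    (hx₁ : ∃ α β : ℝ, 0 ≤ α ∧ 0 ≤ β ∧ x₁ = α • a + β • b)
    (hle : ‖x₀‖ ≤ ‖x₁‖) :
    ‖x₀ - x₁‖ ≤ ‖x₁‖ := by
  obtain ⟨α₀, β₀, hα₀, hβ₀, h₀⟩ := hx₀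
  obtain ⟨α₁, β₁, hα₁, hβ₁, h₁⟩ := hx₁
  have hab1 : ‖a - b‖ ≤ 1 := hab.le
  have hba1 : ‖b - a‖ ≤ 1 := by rw [norm_sub_rev]; exact hab.le
  -- monotonicity in both coordinates
  have mono : ∀ α β α' β' : ℝ, 0 ≤ α → 0 ≤ β → α ≤ α' → β ≤ β' →
      ‖α • a + β • b‖ ≤ ‖α' • a + β' • b‖ := by
    intro α β α' β' hα hβ h1 h2
    calc ‖α • a + β • b‖ ≤ ‖α • a + β' • b‖ := norm_mono_beta a b ha hab1 hα hβ h2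
      _ = ‖β' • b + α • a‖ := by rw [add_comm]
      _ ≤ ‖β' • b + α' • a‖ := norm_mono_beta b a hb hba1 (hβ.trans h2) hα h1
      _ = ‖α' • a + β' • b‖ := by rw [add_comm]
  -- bound for mixed signs
  have mix : ∀ s t : ℝ, 0 ≤ s → 0 ≤ t → ‖s • a - t • b‖ ≤ max s t := by
    intro s t hs ht
    rcases le_total s t with h | h
    · have : s • a - t • b = s • (a - b) + (s - t) • b := by
        rw [smul_sub, sub_smul]; abel
      rw [this]
      calc ‖s • (a - b) + (s - t) • b‖ ≤ ‖s • (a - b)‖ + ‖(s - t) • b‖ := norm_add_le _ _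
        _ = s * 1 + (t - s) * 1 := by
            rw [norm_smul, norm_smul, hab, hb, Real.norm_eq_abs, Real.norm_eq_abs,
              abs_of_nonneg hs, abs_of_nonpos (by linarith : s - t ≤ 0)]
            try ring
        _ = t := by ring
        _ ≤ max s t := le_max_right _ _
    · have : s • a - t • b = t • (a - b) + (s - t) • a := by
        rw [smul_sub, sub_smul]; abel
      rw [this]
      calc ‖t • (a - b) + (s - t) • a‖ ≤ ‖t • (a - b)‖ + ‖(s - t) • a‖ := norm_add_le _ _
        _ = t * 1 + (s - t) * 1 := by
            rw [norm_smul, norm_smul, hab, ha, Real.norm_eq_abs, Real.norm_eq_abs,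
              abs_of_nonneg ht, abs_of_nonneg (by linarith : 0 ≤ s - t)]
            try ring
        _ = s := by ring
        _ ≤ max s t := le_max_left _ _
  have hx0a : α₀ ≤ ‖x₀‖ := by rw [h₀]; exact coeff_le_norm' a b ha hab1 hα₀ hβ₀
  have hx1a : α₁ ≤ ‖x₁‖ := by rw [h₁]; exact coeff_le_norm' a b ha hab1 hα₁ hβ₁
  have hx0b : β₀ ≤ ‖x₀‖ := by
    rw [h₀, add_comm]; exact coeff_le_norm' b a hb hba1 hβ₀ hα₀
  have hx1b : β₁ ≤ ‖x₁‖ := by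
    rw [h₁, add_comm]; exact coeff_le_norm' b a hb hba1 hβ₁ hα₁
  rcases le_total α₁ α₀ with hA | hA <;> rcases le_total β₁ β₀ with hB | hB
  · -- α₀ ≥ α₁, β₀ ≥ β₁ : x₀ - x₁ in cone, ≤ ‖x₀‖
    have hd : x₀ - x₁ = (α₀ - α₁) • a + (β₀ - β₁) • b := by
      rw [h₀, h₁, sub_smul, sub_smul]; abel
    rw [hd]
    calc ‖(α₀ - α₁) • a + (β₀ - β₁) • b‖ ≤ ‖α₀ • a + β₀ • b‖ :=
          mono _ _ _ _ (by linarith) (by linarith) (by linarith) (by linarith)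
      _ = ‖x₀‖ := by rw [h₀]
      _ ≤ ‖x₁‖ := hle
  · -- α₀ ≥ α₁, β₀ ≤ β₁ : mixed
    have hd : x₀ - x₁ = (α₀ - α₁) • a - (β₁ - β₀) • b := by
      rw [h₀, h₁, sub_smul, sub_smul]; abel
    rw [hd]
    refine (mix _ _ (by linarith) (by linarith)).trans ?_
    apply max_le <;> linarith
  · -- α₀ ≤ α₁, β₀ ≥ β₁ : mixed, other side
    have hd : x₀ - x₁ = -((α₁ - α₀) • a - (β₀ - β₁) • b) := by
      rw [h₀, h₁, sub_smul, sub_smul]; abel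
    rw [hd, norm_neg]
    refine (mix _ _ (by linarith) (by linarith)).trans ?_
    apply max_le <;> linarith
  · -- α₀ ≤ α₁, β₀ ≤ β₁ : x₁ - x₀ in cone, ≤ ‖x₁‖
    have hd : x₀ - x₁ = -((α₁ - α₀) • a + (β₁ - β₀) • b) := by
      rw [h₀, h₁, sub_smul, sub_smul]; abel
    rw [hd, norm_neg]
    calc ‖(α₁ - α₀) • a + (β₁ - β₀) • b‖ ≤ ‖α₁ • a + β₁ • b‖ :=
          mono _ _ _ _ (by linarith) (by linarith) (by linarith) (by linarith)
      _ = ‖x₁‖ := by rw [h₁]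

/-- The Claim in the proof of Lemma 4 of the paper: if `a`, `b` are unit vectors at
distance 1 in a two-dimensional real normed vector space, and `x₀, x₁` lie in the cone
spanned by `a` and `b` with `‖x₀‖ ≤ ‖x₁‖`, then `‖x₀ − x₁‖ ≤ ‖x₁‖`. -/
theorem norm_sub_le_in_cone
    {E : Type*} [NormedAddCommGroup E] [NormedSpace ℝ E]
    (hdim : Module.finrank ℝ E = 2)
    (a b : E) (ha : ‖a‖ = 1) (hb : ‖b‖ = 1) (hab : ‖a - b‖ = 1)
    (x₀ x₁ : E) (hx₀ : x₀ ∈ cone a b) (hx₁ : x₁ ∈ cone a b)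
    (hle : ‖x₀‖ ≤ ‖x₁‖) :
    ‖x₀ - x₁‖ ≤ ‖x₁‖ := by
  exact norm_sub_le_in_cone_aux hdim a b ha hb hab x₀ x₁ hx₀ hx₁ hle
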